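/- Let p and q be probability distributions on [n] with q_x > 0 for all x. If a treap is built with priorities pri_x = −⌊log₂ log₂(1/q_x)⌋ + δ_x (δ_x i.i.d. uniform on (0,1)), then the expected total cost of processing an access sequence with empirical distribution p over m accesses is O(m · Ent(p,q)) where Ent(p,q) = Σ_x p_x log(1/q_x) is the cross entropy. Consequently the extra cost compared to using the true distribution p is O(m · D_KL(p‖q)). -/

import Mathlib

open MeasureTheory

/-- Depth of item `x` in the treap over `Fin n` with priorities `pri`. -/
noncomputable def treapDepth (n : ℕ) (pri : Fin n → ℝ) (x : Fin n) : ℕ :=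
  (Finset.univ.filter fun y : Fin n =>
    ∀ z : Fin n, min x y ≤ z → z ≤ max x y → pri z ≤ pri y).card

open Set
open scoped ENNReal


noncomputable def nu : Measure ℝ := volume.restrict (Set.Icc (0:ℝ) 1)

instance : IsProbabilityMeasure nu := ⟨by simp [nu, Real.volume_Icc]⟩

lemma pi_restrict (n : ℕ) :
    (Measure.pi fun _ : Fin n => nu) =
      (volume : Measure (Fin n → ℝ)).restrict (Set.pi univ fun _ => Set.Icc (0:ℝ) 1) := by
  refine (Measure.pi_eq (μ := fun _ : Fin n => nu) (μ' := (volume : Measure (Fin n → ℝ)).restrict (Set.pi univ fun _ => Set.Icc (0:ℝ) 1)) fun s hs => ?_)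
  rw [Measure.restrict_apply (MeasurableSet.univ_pi hs), ← Set.pi_inter_distrib]
  rw [volume_pi, Measure.pi_pi]
  simp [nu, Measure.restrict_apply (hs _)]

lemma diag_null (n : ℕ) (a b : Fin n) (hab : a ≠ b) :
    (Measure.pi fun _ : Fin n => nu) {δ | δ a = δ b} = 0 := by
  rw [pi_restrict]
  apply measure_mono_null (t := {δ : Fin n → ℝ | δ a = δ b})
  · exact fun δ h => h
  · rw [Measure.restrict_apply']
    · apply measure_mono_null (Set.inter_subset_left)
      have : {δ : Fin n → ℝ | δ a = δ b} =
          (LinearMap.ker ((LinearMap.proj a : (Fin n → ℝ) →ₗ[ℝ] ℝ) - LinearMap.proj b) : Set (Fin n → ℝ)) := by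
        ext δ; simp [sub_eq_zero]
      rw [this]
      apply Measure.addHaar_submodule
      intro h
      have : (fun i => if i = a then (1:ℝ) else 0) ∈ (⊤ : Submodule ℝ (Fin n → ℝ)) := trivial
      rw [← h] at this
      simp [LinearMap.mem_ker, sub_eq_zero, hab.symm] at this
    · exact MeasurableSet.univ_pi fun _ => measurableSet_Icc

lemma swap_preimage (n : ℕ) (a b : Fin n) (E : Set (Fin n → ℝ)) (hE : MeasurableSet E) :
    (Measure.pi fun _ : Fin n => nu) ((fun δ => δ ∘ (Equiv.swap a b)) ⁻¹' E)
      = (Measure.pi fun _ : Fin n => nu) E := by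
  have h := measurePreserving_piCongrLeft (fun _ : Fin n => nu) (Equiv.swap a b)
  have hco : ⇑(MeasurableEquiv.piCongrLeft (fun _ : Fin n => ℝ) (Equiv.swap a b))
      = fun δ : Fin n → ℝ => δ ∘ (Equiv.swap a b) := by
    ext δ i
    simp [MeasurableEquiv.piCongrLeft, Equiv.piCongrLeft, Equiv.piCongrLeft',
      Equiv.swap_apply_def]
    exact eq_rec_constant _ _
  have := h.measure_preimage hE.nullMeasurableSet
  rwa [hco] at this

lemma measE (n : ℕ) (T : Finset (Fin n)) (v : Fin n) :
    MeasurableSet {δ : Fin n → ℝ | ∀ z ∈ T, δ z ≤ δ v} := by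
  have : {δ : Fin n → ℝ | ∀ z ∈ T, δ z ≤ δ v} = ⋂ z ∈ T, {δ | δ z ≤ δ v} := by
    ext δ; simp
  rw [this]
  exact MeasurableSet.biInter T.countable_toSet fun z _ =>
    measurableSet_le (measurable_pi_apply z) (measurable_pi_apply v)

lemma max_bound (n : ℕ) (T : Finset (Fin n)) (w : Fin n) (hw : w ∈ T) :
    ((Measure.pi fun _ : Fin n => nu) {δ | ∀ z ∈ T, δ z ≤ δ w}).toReal ≤ 1 / T.card := by
  set μ := Measure.pi fun _ : Fin n => nu with hμ
  set E : Fin n → Set (Fin n → ℝ) := fun v => {δ | ∀ z ∈ T, δ z ≤ δ v} with hE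
  -- all E v, v ∈ T have equal measure
  have hswap : ∀ v ∈ T, ∀ v' ∈ T, μ (E v) = μ (E v') := by
    intro v hv v' hv'
    have hpre : (fun δ : Fin n → ℝ => δ ∘ (Equiv.swap v v')) ⁻¹' (E v) = E v' := by
      ext δ
      simp only [hE, mem_preimage, Set.mem_setOf_eq, Function.comp_apply]
      constructor
      · intro h z hz
        have := h ((Equiv.swap v v') z) (by
          have : ((Equiv.swap v v') z) ∈ T := by
            rcases eq_or_ne z v with rfl | h1
            · simpa [Equiv.swap_apply_left] using hv'
            rcases eq_or_ne z v' with rfl | h2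
            · simpa [Equiv.swap_apply_right] using hv
            · simpa [Equiv.swap_apply_of_ne_of_ne h1 h2] using hz
          exact this)
        simpa [Equiv.swap_apply_left] using this
      · intro h z hz
        have hz' : (Equiv.swap v v') z ∈ T := by
          rcases eq_or_ne z v with rfl | h1
          · simpa [Equiv.swap_apply_left] using hv'
          rcases eq_or_ne z v' with rfl | h2
          · simpa [Equiv.swap_apply_right] using hv
          · simpa [Equiv.swap_apply_of_ne_of_ne h1 h2] using hz
        have := h _ hz'
        simpa [Equiv.swap_apply_left] using this
    rw [← swap_preimage n v v' (E v) (measE n T v), hpre]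
  -- null set of ties
  have hN : μ (⋃ a ∈ T, ⋃ b ∈ T, {δ : Fin n → ℝ | a ≠ b ∧ δ a = δ b}) = 0 := by
    refine measure_biUnion_null_iff T.countable_toSet |>.2 fun a _ => ?_
    refine measure_biUnion_null_iff T.countable_toSet |>.2 fun b _ => ?_
    rcases eq_or_ne a b with rfl | hab
    · convert measure_empty (μ := μ); ext δ; simp
    · exact measure_mono_null (fun δ h => h.2) (diag_null n a b hab)
  set N := ⋃ a ∈ T, ⋃ b ∈ T, {δ : Fin n → ℝ | a ≠ b ∧ δ a = δ b} with hNdef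
  have hNmeas : MeasurableSet N := by
    refine MeasurableSet.biUnion T.countable_toSet fun a _ => ?_
    refine MeasurableSet.biUnion T.countable_toSet fun b _ => ?_
    rcases eq_or_ne a b with rfl | hab
    · convert MeasurableSet.empty; ext δ; simp
    · have : {δ : Fin n → ℝ | a ≠ b ∧ δ a = δ b} = {δ | δ a = δ b} := by
        ext δ; simp [hab]
      rw [this]
      exact measurableSet_eq_fun (measurable_pi_apply a) (measurable_pi_apply b)
  -- the sets E v \ N, v ∈ T, are pairwise disjoint
  have hdisj : (T : Set (Fin n)).PairwiseDisjoint fun v => E v \ N := by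
    intro v hv v' hv' hvv'
    refine Set.disjoint_left.2 fun δ h1 h2 => ?_
    have e1 : δ v' ≤ δ v := h1.1 v' hv'
    have e2 : δ v ≤ δ v' := h2.1 v hv
    exact h1.2 (Set.mem_biUnion hv (Set.mem_biUnion hv' ⟨hvv', le_antisymm e2 e1⟩))
  have hsum : ∑ v ∈ T, μ (E v) ≤ 1 := by
    have h1 : ∀ v ∈ T, μ (E v) = μ (E v \ N) := fun v hv =>
      (measure_diff_null hN).symm
    calc ∑ v ∈ T, μ (E v) = ∑ v ∈ T, μ (E v \ N) := Finset.sum_congr rfl h1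
      _ = μ (⋃ v ∈ T, (E v \ N)) :=
          (measure_biUnion_finset hdisj fun v _ => (measE n T v).diff hNmeas).symm
      _ ≤ 1 := prob_le_one
  have hcard : (T.card : ℝ≥0∞) * μ (E w) ≤ 1 := by
    have : ∑ v ∈ T, μ (E v) = T.card * μ (E w) := by
      rw [Finset.sum_congr rfl fun v hv => hswap v hv w hw]
      simp [Finset.sum_const, nsmul_eq_mul]
    rwa [← this]
  have hc0 : (T.card : ℝ≥0∞) ≠ 0 := by
    simp [Finset.card_eq_zero, Finset.nonempty_iff_ne_empty.1 ⟨w, hw⟩]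
  have h2 : μ (E w) ≤ 1 / (T.card : ℝ≥0∞) := by
    rw [ENNReal.le_div_iff_mul_le (Or.inl hc0) (Or.inl (ENNReal.natCast_ne_top _))]
    rwa [mul_comm]
  have h3 := ENNReal.toReal_mono (by simp [hc0]) h2
  rwa [ENNReal.toReal_div, ENNReal.toReal_one, ENNReal.toReal_natCast] at h3

noncomputable def lev (n : ℕ) (q : Fin n → ℝ) (y : Fin n) : ℤ :=
  ⌊Real.logb 2 (Real.logb 2 (1 / q y))⌋

def Aset (n : ℕ) (q : Fin n → ℝ) (x y : Fin n) : Set (Fin n → ℝ) :=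
  {δ | ∀ z : Fin n, min x y ≤ z → z ≤ max x y →
    -((lev n q z : ℤ) : ℝ) + δ z ≤ -((lev n q y : ℤ) : ℝ) + δ y}

lemma measA (n : ℕ) (q : Fin n → ℝ) (x y : Fin n) : MeasurableSet (Aset n q x y) := by
  have : Aset n q x y = ⋂ z : Fin n, {δ : Fin n → ℝ | min x y ≤ z → z ≤ max x y →
      -((lev n q z : ℤ) : ℝ) + δ z ≤ -((lev n q y : ℤ) : ℝ) + δ y} := by
    ext δ; simp [Aset]
  rw [this]
  refine MeasurableSet.iInter fun z => ?_
  by_cases h1 : min x y ≤ z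
  · by_cases h2 : z ≤ max x y
    · have : {δ : Fin n → ℝ | min x y ≤ z → z ≤ max x y →
          -((lev n q z : ℤ) : ℝ) + δ z ≤ -((lev n q y : ℤ) : ℝ) + δ y}
          = {δ : Fin n → ℝ | -((lev n q z : ℤ) : ℝ) + δ z ≤ -((lev n q y : ℤ) : ℝ) + δ y} := by
        ext δ; simp [h1, h2]
      rw [this]
      exact measurableSet_le (by fun_prop) (by fun_prop)
    · have : {δ : Fin n → ℝ | min x y ≤ z → z ≤ max x y →
          -((lev n q z : ℤ) : ℝ) + δ z ≤ -((lev n q y : ℤ) : ℝ) + δ y} = Set.univ := by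
        ext δ; simp [h2]
      rw [this]; exact MeasurableSet.univ
  · have : {δ : Fin n → ℝ | min x y ≤ z → z ≤ max x y →
        -((lev n q z : ℤ) : ℝ) + δ z ≤ -((lev n q y : ℤ) : ℝ) + δ y} = Set.univ := by
      ext δ; simp [h1]
    rw [this]; exact MeasurableSet.univ

lemma integral_depth (n : ℕ) (q : Fin n → ℝ) (x : Fin n) :
    ∫ δ : Fin n → ℝ,
        (treapDepth n (fun y => -((⌊Real.logb 2 (Real.logb 2 (1 / q y))⌋ : ℤ) : ℝ) + δ y) x : ℝ)
        ∂(Measure.pi fun _ : Fin n => nu)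
      = ∑ y : Fin n, ((Measure.pi fun _ : Fin n => nu) (Aset n q x y)).toReal := by
  have hfun : ∀ δ : Fin n → ℝ,
      (treapDepth n (fun y => -((⌊Real.logb 2 (Real.logb 2 (1 / q y))⌋ : ℤ) : ℝ) + δ y) x : ℝ)
        = ∑ y : Fin n, (Aset n q x y).indicator (fun _ => (1:ℝ)) δ := by
    intro δ
    rw [treapDepth, Finset.card_filter]
    push_cast
    refine Finset.sum_congr rfl fun y _ => ?_
    by_cases h : δ ∈ Aset n q x y
    · rw [Set.indicator_of_mem h, if_pos]
      exact fun z h1 h2 => h z h1 h2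
    · rw [Set.indicator_of_notMem h, if_neg]
      intro hcon
      exact h fun z h1 h2 => hcon z h1 h2
  simp_rw [hfun]
  rw [integral_finset_sum]
  · refine Finset.sum_congr rfl fun y _ => ?_
    rw [integral_indicator (measA n q x y)]
    simp
    rfl
  · intro y _
    exact (integrable_const (1:ℝ)).indicator (measA n q x y)

lemma coord_null (n : ℕ) (i : Fin n) (s : Set ℝ) (hs : nu s = 0) :
    (Measure.pi fun _ : Fin n => nu) {δ : Fin n → ℝ | δ i ∈ s} = 0 := by
  have := Measure.pi_eval_preimage_null (μ := fun _ : Fin n => nu) (i := i) hs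
  convert this using 2
  rfl

lemma nu_gt_one : nu (Set.Ioi (1:ℝ)) = 0 := by
  rw [nu, Measure.restrict_apply measurableSet_Ioi]
  have : Set.Ioi (1:ℝ) ∩ Set.Icc 0 1 = ∅ := by
    ext t
    simp only [Set.mem_inter_iff, Set.mem_Ioi, Set.mem_Icc, Set.mem_empty_iff_false, iff_false]
    rintro ⟨h1, h2, h3⟩; linarith
  rw [this]; exact measure_empty

lemma nu_lt_zero : nu (Set.Iio (0:ℝ)) = 0 := by
  rw [nu, Measure.restrict_apply measurableSet_Iio]
  have : Set.Iio (0:ℝ) ∩ Set.Icc 0 1 = ∅ := by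
    ext t
    simp only [Set.mem_inter_iff, Set.mem_Iio, Set.mem_Icc, Set.mem_empty_iff_false, iff_false]
    rintro ⟨h1, h2, h3⟩; linarith
  rw [this]; exact measure_empty

lemma nu_one : nu {(1:ℝ)} = 0 := by
  rw [nu, Measure.restrict_apply (measurableSet_singleton 1)]
  exact measure_mono_null Set.inter_subset_left (Real.volume_singleton)

lemma blocked_null (n : ℕ) (q : Fin n → ℝ) (x y z0 : Fin n)
    (h1 : min x y ≤ z0) (h2 : z0 ≤ max x y) (hlt : lev n q z0 < lev n q y) :
    (Measure.pi fun _ : Fin n => nu) (Aset n q x y) = 0 := by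
  set μ := Measure.pi fun _ : Fin n => nu
  have hsub : Aset n q x y ⊆
      {δ : Fin n → ℝ | δ y ∈ Set.Ioi (1:ℝ)} ∪ {δ | δ z0 ∈ Set.Iio (0:ℝ)}
        ∪ {δ | δ y ∈ ({1} : Set ℝ)} := by
    intro δ hδ
    have := hδ z0 h1 h2
    have hly : (lev n q z0 : ℝ) + 1 ≤ (lev n q y : ℝ) := by exact_mod_cast hlt
    by_cases hy : 1 < δ y
    · exact Or.inl (Or.inl hy)
    by_cases hz : δ z0 < 0
    · exact Or.inl (Or.inr hz)
    · refine Or.inr ?_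
      simp only [Set.mem_setOf_eq, Set.mem_singleton_iff]
      push_neg at hy hz
      have : δ z0 + 1 ≤ δ y := by linarith
      linarith
  refine measure_mono_null hsub ?_
  refine measure_union_null (measure_union_null ?_ ?_) ?_
  · exact coord_null n y _ nu_gt_one
  · exact coord_null n z0 _ nu_lt_zero
  · exact coord_null n y _ nu_one

noncomputable def Tset (n : ℕ) (q : Fin n → ℝ) (x y : Fin n) : Finset (Fin n) :=
  Finset.univ.filter fun z => (min x y ≤ z ∧ z ≤ max x y) ∧ lev n q z = lev n q y

lemma y_mem_Tset (n : ℕ) (q : Fin n → ℝ) (x y : Fin n) : y ∈ Tset n q x y := by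
  simp [Tset, min_le_of_right_le le_rfl, le_max_right]

lemma Aset_le_inv_card (n : ℕ) (q : Fin n → ℝ) (x y : Fin n) :
    ((Measure.pi fun _ : Fin n => nu) (Aset n q x y)).toReal ≤ 1 / (Tset n q x y).card := by
  refine le_trans ?_ (max_bound n (Tset n q x y) y (y_mem_Tset n q x y))
  have hsub : Aset n q x y ⊆ {δ : Fin n → ℝ | ∀ z ∈ Tset n q x y, δ z ≤ δ y} := by
    intro δ hδ z hz
    simp only [Tset, Finset.mem_filter] at hz
    have := hδ z hz.2.1.1 hz.2.1.2
    rw [hz.2.2] at this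
    linarith
  have hfin : ((Measure.pi fun _ : Fin n => nu) {δ : Fin n → ℝ | ∀ z ∈ Tset n q x y, δ z ≤ δ y}) ≠ ⊤ :=
    measure_ne_top _ _
  exact ENNReal.toReal_mono hfin (measure_mono hsub)

lemma q_lower (n : ℕ) (q : Fin n → ℝ) (z : Fin n) (hq : 0 < q z) (k : ℕ)
    (hk : lev n q z = (k : ℤ)) : 1 / (2:ℝ) ^ (2 ^ (k+1)) < q z := by
  have h2 : (1:ℝ) < 2 := one_lt_two
  have hpow : (1:ℝ) < (2:ℝ) ^ (2 ^ (k+1)) := one_lt_pow₀ h2 (by positivity)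
  set u := Real.logb 2 (1 / q z) with hu
  have hfloor : Real.logb 2 u < (k:ℝ) + 1 := by
    have := Int.lt_floor_add_one (Real.logb 2 u)
    rw [lev] at hk
    rw [hk] at this
    exact_mod_cast this
  by_cases hupos : 0 < u
  · have h1q : (0:ℝ) < 1 / q z := by positivity
    have hult : u < (2:ℝ) ^ ((k:ℝ) + 1) := by
      have := (Real.logb_lt_iff_lt_rpow h2 hupos).1 hfloor
      exact this
    have : u < (2:ℝ) ^ (k+1 : ℕ) := by
      rwa [show ((k:ℝ) + 1) = ((k+1 : ℕ) : ℝ) by push_cast; ring, Real.rpow_natCast] at hult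
    have hlt : 1 / q z < (2:ℝ) ^ (((2 ^ (k+1) : ℕ)) : ℝ) := by
      refine (Real.logb_lt_iff_lt_rpow h2 h1q).1 ?_
      rw [← hu]; push_cast; exact this
    rw [Real.rpow_natCast] at hlt
    rw [div_lt_iff₀ hq] at hlt
    rw [div_lt_iff₀ (by positivity)]
    nlinarith
  · push_neg at hupos
    have h1q : 1 / q z ≤ 1 := by
      by_contra hcon
      push_neg at hcon
      have : 0 < Real.logb 2 (1 / q z) := Real.logb_pos h2 hcon
      rw [← hu] at this
      linarith
    have : 1 ≤ q z := by
      rw [div_le_one hq] at h1q; linarith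
    calc 1 / (2:ℝ) ^ (2 ^ (k+1)) < 1 := by
          rw [div_lt_one (by positivity)]; exact hpow
      _ ≤ q z := this

lemma level_card (n : ℕ) (q : Fin n → ℝ) (hq : ∀ z, 0 < q z) (hq1 : ∑ z, q z = 1) (k : ℕ) :
    ((Finset.univ.filter fun z : Fin n => lev n q z = (k:ℤ)).card : ℝ) ≤ (2:ℝ) ^ (2 ^ (k+1)) := by
  set s := Finset.univ.filter fun z : Fin n => lev n q z = (k:ℤ) with hs
  have hsum : (s.card : ℝ) * (1 / (2:ℝ) ^ (2 ^ (k+1))) ≤ 1 := by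
    calc (s.card : ℝ) * (1 / (2:ℝ) ^ (2 ^ (k+1)))
        ≤ ∑ z ∈ s, q z := by
          have := Finset.card_nsmul_le_sum s q (1 / (2:ℝ) ^ (2 ^ (k+1)))
            (fun z hz => le_of_lt
              (q_lower n q z (hq z) k (by simpa [hs] using (Finset.mem_filter.1 hz).2)))
          rwa [nsmul_eq_mul] at this
      _ ≤ ∑ z, q z := Finset.sum_le_sum_of_subset_of_nonneg (Finset.filter_subset _ _)
          (fun z _ _ => le_of_lt (hq z))
      _ = 1 := hq1
  have hpos : (0:ℝ) < (2:ℝ) ^ (2 ^ (k+1)) := by positivity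
  calc (s.card : ℝ) = (s.card : ℝ) * (1 / (2:ℝ) ^ (2 ^ (k+1))) * (2:ℝ) ^ (2 ^ (k+1)) := by
        field_simp
    _ ≤ 1 * (2:ℝ) ^ (2 ^ (k+1)) := by
        exact mul_le_mul_of_nonneg_right hsum (le_of_lt hpos)
    _ = (2:ℝ) ^ (2 ^ (k+1)) := one_mul _

lemma neg_level_big (n : ℕ) (q : Fin n → ℝ) (z : Fin n) (hq : 0 < q z)
    (hk : lev n q z < 0) : 1 / 2 < q z := by
  set u := Real.logb 2 (1 / q z) with hu
  have h2 : (1:ℝ) < 2 := one_lt_two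
  have hlev : lev n q z = ⌊Real.logb 2 u⌋ := rfl
  have hfl : Real.logb 2 u < 0 := by
    by_contra hcon
    push_neg at hcon
    have := Int.floor_nonneg.2 hcon
    rw [← hlev] at this
    omega
  by_cases hupos : 0 < u
  · have hult : u < 1 := by
      have := (Real.logb_lt_iff_lt_rpow h2 hupos).1 hfl
      simpa using this
    have h1q : (0:ℝ) < 1 / q z := by positivity
    have : 1 / q z < (2:ℝ) ^ (1:ℝ) := by
      refine (Real.logb_lt_iff_lt_rpow h2 h1q).1 ?_
      rw [← hu]; simpa using hult
    rw [Real.rpow_one, div_lt_iff₀ hq] at this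
    linarith
  · push_neg at hupos
    have h1q : 1 / q z ≤ 1 := by
      by_contra hcon
      push_neg at hcon
      have : 0 < Real.logb 2 (1 / q z) := Real.logb_pos h2 hcon
      rw [← hu] at this
      linarith
    rw [div_le_one hq] at h1q
    linarith

lemma neg_level_card (n : ℕ) (q : Fin n → ℝ) (hq : ∀ z, 0 < q z) (hq1 : ∑ z, q z = 1) :
    (Finset.univ.filter fun z : Fin n => lev n q z < 0).card ≤ 1 := by
  rw [Finset.card_le_one]
  intro a ha b hb
  by_contra hab
  have hqa := neg_level_big n q a (hq a) (by simpa using (Finset.mem_filter.1 ha).2)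
  have hqb := neg_level_big n q b (hq b) (by simpa using (Finset.mem_filter.1 hb).2)
  have : q a + q b ≤ 1 := by
    rw [← hq1]
    have : ∑ z ∈ ({a, b} : Finset (Fin n)), q z ≤ ∑ z, q z :=
      Finset.sum_le_sum_of_subset_of_nonneg (Finset.subset_univ _)
        (fun z _ _ => le_of_lt (hq z))
    rwa [Finset.sum_pair hab] at this
  linarith

lemma side_sum_right (n : ℕ) (q : Fin n → ℝ) (x : Fin n) (k : ℤ) (s : Finset (Fin n))
    (hs : ∀ y ∈ s, x < y ∧ lev n q y = k) :
    ∑ y ∈ s, 1 / ((Tset n q x y).card : ℝ)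
      ≤ (harmonic (Finset.univ.filter fun z : Fin n => lev n q z = k).card : ℝ) := by
  set J := (Finset.univ.filter fun z : Fin n => lev n q z = k).card with hJ
  set r : Fin n → ℕ := fun y => (Finset.univ.filter fun z : Fin n =>
    x < z ∧ z ≤ y ∧ lev n q z = k).card with hr
  have hr1 : ∀ y ∈ s, 1 ≤ r y := by
    intro y hy
    refine Finset.card_pos.2 ⟨y, ?_⟩
    simp [hr, (hs y hy).1, (hs y hy).2]
  have hrJ : ∀ y ∈ s, r y ≤ J := by
    intro y hy
    refine Finset.card_le_card fun z hz => ?_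
    simp only [Finset.mem_filter, Finset.mem_univ, true_and] at hz ⊢
    exact hz.2.2
  have hrT : ∀ y ∈ s, r y ≤ (Tset n q x y).card := by
    intro y hy
    refine Finset.card_le_card fun z hz => ?_
    simp only [Finset.mem_filter, Finset.mem_univ, true_and] at hz
    simp only [Tset, Finset.mem_filter, Finset.mem_univ, true_and]
    refine ⟨⟨?_, ?_⟩, ?_⟩
    · rw [min_eq_left (le_of_lt (hs y hy).1)]; exact le_of_lt hz.1
    · rw [max_eq_right (le_of_lt (hs y hy).1)]; exact hz.2.1
    · rw [(hs y hy).2]; exact hz.2.2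
  have hinj : Set.InjOn r s := by
    have hmono : ∀ y ∈ s, ∀ y' ∈ s, y < y' → r y < r y' := by
      intro y hy y' hy' hlt
      refine Finset.card_lt_card ?_
      rw [Finset.ssubset_iff_of_subset]
      · exact ⟨y', by simp [hr, (hs y' hy').1, (hs y' hy').2], by simp [hr, not_le.2 hlt]⟩
      · intro z hz
        simp only [hr, Finset.mem_filter, Finset.mem_univ, true_and] at hz ⊢
        exact ⟨hz.1, hz.2.1.trans (le_of_lt hlt), hz.2.2⟩
    intro y hy y' hy' heq
    by_contra hne
    rcases lt_or_gt_of_ne hne with h | h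
    · exact absurd heq (ne_of_lt (hmono y hy y' hy' h))
    · exact absurd heq.symm (ne_of_lt (hmono y' hy' y hy h))
  calc ∑ y ∈ s, 1 / ((Tset n q x y).card : ℝ)
      ≤ ∑ y ∈ s, 1 / (r y : ℝ) := by
        refine Finset.sum_le_sum fun y hy => ?_
        have h1 := hr1 y hy
        have h2 := hrT y hy
        apply one_div_le_one_div_of_le
        · exact_mod_cast h1
        · exact_mod_cast h2
    _ = ∑ v ∈ s.image r, 1 / (v : ℝ) := by
        rw [Finset.sum_image fun y hy y' hy' h => hinj hy hy' h]
    _ ≤ ∑ v ∈ Finset.Icc 1 J, 1 / (v : ℝ) := by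
        refine Finset.sum_le_sum_of_subset_of_nonneg ?_ (fun v _ _ => by positivity)
        intro v hv
        rcases Finset.mem_image.1 hv with ⟨y, hy, rfl⟩
        exact Finset.mem_Icc.2 ⟨hr1 y hy, hrJ y hy⟩
    _ = (harmonic J : ℝ) := by
        rw [harmonic_eq_sum_Icc]
        push_cast
        exact Finset.sum_congr rfl fun v _ => one_div _

lemma side_sum_left (n : ℕ) (q : Fin n → ℝ) (x : Fin n) (k : ℤ) (s : Finset (Fin n))
    (hs : ∀ y ∈ s, y < x ∧ lev n q y = k) :
    ∑ y ∈ s, 1 / ((Tset n q x y).card : ℝ)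
      ≤ (harmonic (Finset.univ.filter fun z : Fin n => lev n q z = k).card : ℝ) := by
  set J := (Finset.univ.filter fun z : Fin n => lev n q z = k).card with hJ
  set r : Fin n → ℕ := fun y => (Finset.univ.filter fun z : Fin n =>
    y ≤ z ∧ z < x ∧ lev n q z = k).card with hr
  have hr1 : ∀ y ∈ s, 1 ≤ r y := by
    intro y hy
    refine Finset.card_pos.2 ⟨y, ?_⟩
    simp [hr, (hs y hy).1, (hs y hy).2]
  have hrJ : ∀ y ∈ s, r y ≤ J := by
    intro y hy
    refine Finset.card_le_card fun z hz => ?_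
    simp only [Finset.mem_filter, Finset.mem_univ, true_and] at hz ⊢
    exact hz.2.2
  have hrT : ∀ y ∈ s, r y ≤ (Tset n q x y).card := by
    intro y hy
    refine Finset.card_le_card fun z hz => ?_
    simp only [Finset.mem_filter, Finset.mem_univ, true_and] at hz
    simp only [Tset, Finset.mem_filter, Finset.mem_univ, true_and]
    refine ⟨⟨?_, ?_⟩, ?_⟩
    · rw [min_eq_right (le_of_lt (hs y hy).1)]; exact hz.1
    · rw [max_eq_left (le_of_lt (hs y hy).1)]; exact le_of_lt hz.2.1
    · rw [(hs y hy).2]; exact hz.2.2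
  have hinj : Set.InjOn r s := by
    have hmono : ∀ y ∈ s, ∀ y' ∈ s, y < y' → r y' < r y := by
      intro y hy y' hy' hlt
      refine Finset.card_lt_card ?_
      rw [Finset.ssubset_iff_of_subset]
      · exact ⟨y, by simp [hr, (hs y hy).1, (hs y hy).2], by simp [hr, not_le.2 hlt]⟩
      · intro z hz
        simp only [hr, Finset.mem_filter, Finset.mem_univ, true_and] at hz ⊢
        exact ⟨(le_of_lt hlt).trans hz.1, hz.2.1, hz.2.2⟩
    intro y hy y' hy' heq
    by_contra hne
    rcases lt_or_gt_of_ne hne with h | h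
    · exact absurd heq.symm (ne_of_lt (hmono y hy y' hy' h))
    · exact absurd heq (ne_of_lt (hmono y' hy' y hy h))
  calc ∑ y ∈ s, 1 / ((Tset n q x y).card : ℝ)
      ≤ ∑ y ∈ s, 1 / (r y : ℝ) := by
        refine Finset.sum_le_sum fun y hy => ?_
        have h1 := hr1 y hy
        have h2 := hrT y hy
        apply one_div_le_one_div_of_le
        · exact_mod_cast h1
        · exact_mod_cast h2
    _ = ∑ v ∈ s.image r, 1 / (v : ℝ) := by
        rw [Finset.sum_image fun y hy y' hy' h => hinj hy hy' h]
    _ ≤ ∑ v ∈ Finset.Icc 1 J, 1 / (v : ℝ) := by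
        refine Finset.sum_le_sum_of_subset_of_nonneg ?_ (fun v _ _ => by positivity)
        intro v hv
        rcases Finset.mem_image.1 hv with ⟨y, hy, rfl⟩
        exact Finset.mem_Icc.2 ⟨hr1 y hy, hrJ y hy⟩
    _ = (harmonic J : ℝ) := by
        rw [harmonic_eq_sum_Icc]
        push_cast
        exact Finset.sum_congr rfl fun v _ => one_div _

lemma harm_log (n : ℕ) (q : Fin n → ℝ) (hq : ∀ z, 0 < q z) (hq1 : ∑ z, q z = 1) (k : ℕ) :
    (harmonic (Finset.univ.filter fun z : Fin n => lev n q z = (k:ℤ)).card : ℝ)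
      ≤ 1 + 2^(k+1) * Real.log 2 := by
  set J := (Finset.univ.filter fun z : Fin n => lev n q z = (k:ℤ)).card with hJ
  have h1 : (harmonic J : ℝ) ≤ 1 + Real.log J := harmonic_le_one_add_log J
  have h2 : Real.log J ≤ 2^(k+1) * Real.log 2 := by
    rcases Nat.eq_zero_or_pos J with h | h
    · rw [h]; simp; positivity
    · calc Real.log J ≤ Real.log ((2:ℝ) ^ (2 ^ (k+1))) := by
            refine Real.log_le_log (by exact_mod_cast h) ?_
            exact level_card n q hq hq1 k
        _ = 2^(k+1) * Real.log 2 := by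
            rw [Real.log_pow]; push_cast; ring
  linarith

lemma fiber_bound (n : ℕ) (q : Fin n → ℝ) (hq : ∀ z, 0 < q z) (hq1 : ∑ z, q z = 1)
    (x : Fin n) (k : ℕ) (s : Finset (Fin n))
    (hs : ∀ y ∈ s, y ≠ x ∧ lev n q y = (k:ℤ)) :
    ∑ y ∈ s, 1 / ((Tset n q x y).card : ℝ) ≤ 2 * (1 + 2^(k+1) * Real.log 2) := by
  rw [← Finset.sum_filter_add_sum_filter_not s (fun y => x < y)]
  have hright : ∀ y ∈ s.filter (fun y => x < y), x < y ∧ lev n q y = (k:ℤ) := by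
    intro y hy
    rcases Finset.mem_filter.1 hy with ⟨hy1, hy2⟩
    exact ⟨hy2, (hs y hy1).2⟩
  have hleft : ∀ y ∈ s.filter (fun y => ¬ x < y), y < x ∧ lev n q y = (k:ℤ) := by
    intro y hy
    rcases Finset.mem_filter.1 hy with ⟨hy1, hy2⟩
    exact ⟨lt_of_le_of_ne (not_lt.1 hy2) (hs y hy1).1, (hs y hy1).2⟩
  have hb1 := (side_sum_right n q x (k:ℤ) _ hright).trans (harm_log n q hq hq1 k)
  have hb2 := (side_sum_left n q x (k:ℤ) _ hleft).trans (harm_log n q hq hq1 k)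
  linarith

lemma expdepth_le (n : ℕ) (q : Fin n → ℝ) (hq : ∀ z, 0 < q z) (hq1 : ∑ z, q z = 1)
    (x : Fin n) :
    ∑ y : Fin n, ((Measure.pi fun _ : Fin n => nu) (Aset n q x y)).toReal
      ≤ 24 * (1 + Real.log (1 / q x)) := by
  set μ := Measure.pi fun _ : Fin n => nu with hμ
  set t : Fin n → ℝ := fun y => (μ (Aset n q x y)).toReal with ht
  have tnn : ∀ y, 0 ≤ t y := fun y => ENNReal.toReal_nonneg
  have tle1 : ∀ y, t y ≤ 1 := by
    intro y
    have h := prob_le_one (μ := μ) (s := Aset n q x y)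
    have := ENNReal.toReal_mono (by simp) h
    simpa using this
  -- log(1/qx) ≥ 0
  have hqx1 : q x ≤ 1 := by
    rw [← hq1]
    exact Finset.single_le_sum (fun z _ => le_of_lt (hq z)) (Finset.mem_univ x)
  have hw : 0 ≤ Real.log (1 / q x) :=
    Real.log_nonneg (by rw [le_div_iff₀ (hq x)]; linarith)
  -- split off y = x
  rw [← Finset.sum_filter_add_sum_filter_not Finset.univ (fun y => y = x) t]
  have hA : ∑ y ∈ Finset.univ.filter (fun y => y = x), t y ≤ 1 := by
    rw [Finset.filter_eq' Finset.univ x, if_pos (Finset.mem_univ x), Finset.sum_singleton]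
    exact tle1 x
  set s1 := Finset.univ.filter (fun y => ¬ y = x) with hs1
  rw [← Finset.sum_filter_add_sum_filter_not s1 (fun y => lev n q y < 0) t]
  have hB : ∑ y ∈ s1.filter (fun y => lev n q y < 0), t y ≤ 1 := by
    calc ∑ y ∈ s1.filter (fun y => lev n q y < 0), t y
        ≤ (s1.filter (fun y => lev n q y < 0)).card • (1:ℝ) :=
          Finset.sum_le_card_nsmul _ _ _ (fun y _ => tle1 y)
      _ ≤ 1 := by
          have hsub : s1.filter (fun y => lev n q y < 0) ⊆
              Finset.univ.filter (fun z => lev n q z < 0) := by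
            intro y hy
            simp only [Finset.mem_filter, Finset.mem_univ, true_and] at hy ⊢
            exact hy.2
          have := (Finset.card_le_card hsub).trans (neg_level_card n q hq hq1)
          simp only [nsmul_eq_mul, mul_one]
          exact_mod_cast this
  set s2 := s1.filter (fun y => ¬ lev n q y < 0) with hs2
  rw [← Finset.sum_filter_add_sum_filter_not s2 (fun y => lev n q x < lev n q y) t]
  have hC : ∑ y ∈ s2.filter (fun y => lev n q x < lev n q y), t y = 0 := by
    refine Finset.sum_eq_zero fun y hy => ?_
    simp only [Finset.mem_filter] at hy
    rw [ht]
    simp only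
    rw [blocked_null n q x y x (min_le_left x y) (le_max_left x y) hy.2]
    simp
  set s3 := s2.filter (fun y => ¬ lev n q x < lev n q y) with hs3
  have hs3mem : ∀ y ∈ s3, y ≠ x ∧ 0 ≤ lev n q y ∧ lev n q y ≤ lev n q x := by
    intro y hy
    simp only [hs3, hs2, hs1, Finset.mem_filter, Finset.mem_univ, true_and] at hy
    exact ⟨hy.1.1, by omega, by omega⟩
  set Lx := (lev n q x).toNat with hLx
  have hD : ∑ y ∈ s3, t y ≤ 2 * (Lx + 1) + 4 * Real.log 2 * ((2:ℝ) ^ (Lx + 1) - 1) := by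
    have step1 : ∑ y ∈ s3, t y ≤ ∑ y ∈ s3, 1 / ((Tset n q x y).card : ℝ) :=
      Finset.sum_le_sum fun y _ => Aset_le_inv_card n q x y
    have hmaps : ∀ y ∈ s3, (lev n q y).toNat ∈ Finset.range (Lx + 1) := by
      intro y hy
      rcases hs3mem y hy with ⟨_, h0, h1⟩
      rw [Finset.mem_range, Nat.lt_succ_iff, hLx]
      exact Int.toNat_le_toNat h1
    have step2 : ∑ y ∈ s3, 1 / ((Tset n q x y).card : ℝ)
        = ∑ k ∈ Finset.range (Lx + 1), ∑ y ∈ s3.filter (fun y => (lev n q y).toNat = k),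
            1 / ((Tset n q x y).card : ℝ) :=
      (Finset.sum_fiberwise_of_maps_to hmaps _).symm
    have step3 : ∀ k ∈ Finset.range (Lx + 1),
        ∑ y ∈ s3.filter (fun y => (lev n q y).toNat = k), 1 / ((Tset n q x y).card : ℝ)
          ≤ 2 * (1 + 2^(k+1) * Real.log 2) := by
      intro k _
      refine fiber_bound n q hq hq1 x k _ fun y hy => ?_
      rcases Finset.mem_filter.1 hy with ⟨hy1, hy2⟩
      rcases hs3mem y hy1 with ⟨hne, h0, _⟩
      refine ⟨hne, ?_⟩
      rw [← hy2, Int.toNat_of_nonneg h0]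
    calc ∑ y ∈ s3, t y ≤ _ := step1
      _ = _ := step2
      _ ≤ ∑ k ∈ Finset.range (Lx + 1), 2 * (1 + 2^(k+1) * Real.log 2) :=
          Finset.sum_le_sum step3
      _ = 2 * (Lx + 1) + 4 * Real.log 2 * ((2:ℝ) ^ (Lx + 1) - 1) := by
          rw [Finset.sum_congr rfl (fun k _ => by ring_nf :
            ∀ k ∈ Finset.range (Lx + 1), 2 * (1 + 2^(k+1) * Real.log 2)
              = 2 + (4 * Real.log 2) * 2^k)]
          rw [Finset.sum_add_distrib, Finset.sum_const, ← Finset.mul_sum,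
            geom_sum_eq (by norm_num : (2:ℝ) ≠ 1)]
          simp [nsmul_eq_mul]
          ring
  -- final numeric assembly
  by_cases hneg : lev n q x < 0
  · have hs3empty : ∑ y ∈ s3, t y = 0 := by
      refine Finset.sum_eq_zero fun y hy => ?_
      rcases hs3mem y hy with ⟨_, h0, h1⟩
      omega
    rw [hs3empty, hC]
    nlinarith [hA, hB, hw]
  · push_neg at hneg
    by_cases hq1x : q x = 1
    · have hall : ∀ y : Fin n, y = x := by
        intro y
        by_contra hne
        have hpair : q y + q x ≤ 1 := by
          rw [← hq1]
          have := Finset.sum_le_sum_of_subset_of_nonneg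
            (Finset.subset_univ ({y, x} : Finset (Fin n))) (fun z _ _ => le_of_lt (hq z))
          rwa [Finset.sum_pair hne] at this
        have := hq y
        rw [hq1x] at hpair
        linarith
      have hB0 : ∑ y ∈ s1.filter (fun y => lev n q y < 0), t y = 0 := by
        refine Finset.sum_eq_zero fun y hy => ?_
        rcases Finset.mem_filter.1 hy with ⟨hy1, _⟩
        rcases Finset.mem_filter.1 hy1 with ⟨_, hy2⟩
        exact absurd (hall y) hy2
      have hC0 : ∑ y ∈ s2.filter (fun y => lev n q x < lev n q y), t y = 0 := by
        refine Finset.sum_eq_zero fun y hy => ?_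
        rcases Finset.mem_filter.1 hy with ⟨hy1, _⟩
        rcases Finset.mem_filter.1 hy1 with ⟨hy0, _⟩
        rcases Finset.mem_filter.1 hy0 with ⟨_, hy2⟩
        exact absurd (hall y) hy2
      have hD0 : ∑ y ∈ s3, t y = 0 := by
        refine Finset.sum_eq_zero fun y hy => ?_
        exact absurd (hall y) (hs3mem y hy).1
      rw [hB0, hC0, hD0]
      nlinarith [hA, hw]
    · have hqxlt : q x < 1 := lt_of_le_of_ne hqx1 hq1x
      have hu : 0 < Real.logb 2 (1 / q x) :=
        Real.logb_pos one_lt_two (by rw [lt_div_iff₀ (hq x)]; linarith)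
      have hlev : lev n q x = ⌊Real.logb 2 (Real.logb 2 (1 / q x))⌋ := rfl
      have hLxle : (Lx : ℝ) ≤ Real.logb 2 (Real.logb 2 (1 / q x)) := by
        have h1 : ((lev n q x : ℤ) : ℝ) ≤ Real.logb 2 (Real.logb 2 (1 / q x)) := by
          rw [hlev]; exact Int.floor_le _
        rwa [hLx, show (((lev n q x).toNat : ℕ) : ℝ) = ((lev n q x : ℤ) : ℝ) by
          exact_mod_cast congrArg (fun z : ℤ => (z : ℝ)) (Int.toNat_of_nonneg hneg)]
      have hpow : (2:ℝ) ^ Lx ≤ Real.logb 2 (1 / q x) := by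
        have h2 := Real.rpow_le_rpow_of_exponent_le (le_of_lt one_lt_two) hLxle
        rw [Real.rpow_logb two_pos (by norm_num) hu] at h2
        rwa [Real.rpow_natCast] at h2
      have hlog2lt : Real.log 2 < 0.6931471808 := Real.log_two_lt_d9
      have hlog2gt : (0.6931471803 : ℝ) < Real.log 2 := Real.log_two_gt_d9
      have hu2w : Real.logb 2 (1 / q x) ≤ 2 * Real.log (1 / q x) := by
        rw [Real.logb, div_le_iff₀ (by linarith : (0:ℝ) < Real.log 2)]
        nlinarith [hw]
      have hLx2 : (Lx : ℝ) ≤ (2:ℝ) ^ Lx := by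
        have := Nat.lt_two_pow_self (n := Lx)
        have h2 : (Lx : ℝ) < ((2 ^ Lx : ℕ) : ℝ) := by exact_mod_cast this
        rw [Nat.cast_pow] at h2
        exact_mod_cast h2.le
      have h1le : (1:ℝ) ≤ (2:ℝ) ^ Lx := one_le_pow₀ one_le_two
      have hpow1 : (2:ℝ) ^ (Lx + 1) = 2 * (2:ℝ) ^ Lx := by rw [pow_succ]; ring
      rw [hC]
      rw [hpow1] at hD
      nlinarith [hA, hB, hD, hw, hpow, hu2w, hLx2, h1le, hlog2lt,
        Finset.sum_nonneg (fun y (_ : y ∈ s3) => tnn y)]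


/-- Building the treap from predicted probabilities `q` (priorities
`pri_x = −⌊log₂ log₂(1/q_x)⌋ + δ_x`, `δ_x` i.i.d. uniform on `(0,1)`) and processing `m`
accesses whose empirical distribution is `p` (`p_x = f_x/m`), the expected total cost is
`O(m·Ent(p,q))` where `Ent(p,q) = ∑_x p_x log(1/q_x)`; consequently it is
`O(m·Ent(p) + m·D_KL(p‖q))`, i.e., the extra cost over using `p` is `O(m·D_KL(p‖q))`. -/
theorem stmt6 : ∃ c : ℝ, 0 < c ∧
    ∀ (n m : ℕ) (f : Fin n → ℕ) (q : Fin n → ℝ),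
      (∀ x, 1 ≤ f x) → (∑ x, f x) = m →
      (∀ x, 0 < q x) → (∑ x, q x) = 1 →
      ((∑ x : Fin n, (f x : ℝ) *
            ∫ δ : Fin n → ℝ,
              (treapDepth n
                (fun y => -((⌊Real.logb 2 (Real.logb 2 (1 / q y))⌋ : ℤ) : ℝ) + δ y) x : ℝ)
              ∂(Measure.pi fun _ : Fin n => volume.restrict (Set.Icc (0 : ℝ) 1)))
          ≤ c * (m : ℝ) * (1 + ∑ x : Fin n, ((f x : ℝ) / m) * Real.log (1 / q x)))
      ∧ ((∑ x : Fin n, (f x : ℝ) *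
            ∫ δ : Fin n → ℝ,
              (treapDepth n
                (fun y => -((⌊Real.logb 2 (Real.logb 2 (1 / q y))⌋ : ℤ) : ℝ) + δ y) x : ℝ)
              ∂(Measure.pi fun _ : Fin n => volume.restrict (Set.Icc (0 : ℝ) 1)))
          ≤ c * ((m : ℝ) * (1 + ∑ x : Fin n, ((f x : ℝ) / m) * Real.log ((m : ℝ) / (f x : ℝ)))
              + (m : ℝ) * ∑ x : Fin n, ((f x : ℝ) / m) * Real.log (((f x : ℝ) / m) / q x))) := by
  refine ⟨24, by norm_num, ?_⟩
  intro n m f q hf hm hq hq1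
  have hnu : (fun _ : Fin n => volume.restrict (Set.Icc (0:ℝ) 1)) = fun _ : Fin n => nu := rfl
  have hint : ∀ x : Fin n,
      (∫ δ : Fin n → ℝ,
          (treapDepth n
            (fun y => -((⌊Real.logb 2 (Real.logb 2 (1 / q y))⌋ : ℤ) : ℝ) + δ y) x : ℝ)
          ∂(Measure.pi fun _ : Fin n => volume.restrict (Set.Icc (0 : ℝ) 1)))
        ≤ 24 * (1 + Real.log (1 / q x)) := by
    intro x
    rw [hnu, integral_depth n q x]
    exact expdepth_le n q hq hq1 x
  -- common upper bound for the LHS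
  have hLHS : (∑ x : Fin n, (f x : ℝ) *
      ∫ δ : Fin n → ℝ,
        (treapDepth n
          (fun y => -((⌊Real.logb 2 (Real.logb 2 (1 / q y))⌋ : ℤ) : ℝ) + δ y) x : ℝ)
        ∂(Measure.pi fun _ : Fin n => volume.restrict (Set.Icc (0 : ℝ) 1)))
      ≤ 24 * ((m : ℝ) + ∑ x : Fin n, (f x : ℝ) * Real.log (1 / q x)) := by
    calc (∑ x : Fin n, (f x : ℝ) * _)
        ≤ ∑ x : Fin n, (f x : ℝ) * (24 * (1 + Real.log (1 / q x))) :=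
          Finset.sum_le_sum fun x _ =>
            mul_le_mul_of_nonneg_left (hint x) (by positivity)
      _ = 24 * ((m : ℝ) + ∑ x : Fin n, (f x : ℝ) * Real.log (1 / q x)) := by
          rw [Finset.sum_congr rfl (fun x _ => by ring :
            ∀ x ∈ Finset.univ, (f x : ℝ) * (24 * (1 + Real.log (1 / q x)))
              = 24 * (f x : ℝ) + 24 * ((f x : ℝ) * Real.log (1 / q x)))]
          rw [Finset.sum_add_distrib, ← Finset.mul_sum, ← Finset.mul_sum]
          have : (∑ x : Fin n, (f x : ℝ)) = (m : ℝ) := by exact_mod_cast hm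
          rw [this]; ring
  rcases Nat.eq_zero_or_pos n with hn | hn
  · subst hn
    have hm0 : m = 0 := by simpa using hm.symm
    subst hm0
    constructor <;> simp
  · have hmpos : 0 < m := by
      rw [← hm]
      exact lt_of_lt_of_le hn (Finset.card_fin n ▸ Finset.card_nsmul_le_sum Finset.univ f 1
        (fun x _ => hf x) |>.trans_eq' (by simp))
    have hmR : (0:ℝ) < m := by exact_mod_cast hmpos
    have key : (24:ℝ) * (m : ℝ) * (1 + ∑ x : Fin n, ((f x : ℝ) / m) * Real.log (1 / q x))
        = 24 * ((m : ℝ) + ∑ x : Fin n, (f x : ℝ) * Real.log (1 / q x)) := by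
      have hterm : ∀ x : Fin n, (m:ℝ) * (((f x:ℝ)/m) * Real.log (1/q x))
          = (f x:ℝ) * Real.log (1/q x) := fun x => by field_simp
      rw [mul_assoc, mul_add, mul_one, Finset.mul_sum,
        Finset.sum_congr rfl fun x _ => hterm x]
    constructor
    · rw [key]; exact hLHS
    · have hlogsplit : ∀ x : Fin n,
          Real.log ((m : ℝ) / (f x : ℝ)) + Real.log (((f x : ℝ) / m) / q x)
            = Real.log (1 / q x) := by
        intro x
        have hfx : (0:ℝ) < (f x : ℝ) := by exact_mod_cast hf x
        rw [← Real.log_mul (div_ne_zero (ne_of_gt hmR) (ne_of_gt hfx))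
          (div_ne_zero (div_ne_zero (ne_of_gt hfx) (ne_of_gt hmR)) (ne_of_gt (hq x)))]
        congr 1
        field_simp
      have hRHS2 : (24:ℝ) * ((m : ℝ) * (1 + ∑ x : Fin n, ((f x : ℝ) / m)
            * Real.log ((m : ℝ) / (f x : ℝ)))
          + (m : ℝ) * ∑ x : Fin n, ((f x : ℝ) / m) * Real.log (((f x : ℝ) / m) / q x))
          = 24 * ((m : ℝ) + ∑ x : Fin n, (f x : ℝ) * Real.log (1 / q x)) := by
        have expand : ((m : ℝ) * (1 + ∑ x : Fin n, ((f x : ℝ) / m)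
              * Real.log ((m : ℝ) / (f x : ℝ)))
            + (m : ℝ) * ∑ x : Fin n, ((f x : ℝ) / m) * Real.log (((f x : ℝ) / m) / q x))
            = (m : ℝ) + ∑ x : Fin n, (f x : ℝ) * Real.log (1 / q x) := by
          rw [mul_add, mul_one, Finset.mul_sum, Finset.mul_sum, add_assoc,
            ← Finset.sum_add_distrib]
          congr 1
          refine Finset.sum_congr rfl fun x _ => ?_
          have hfx : (0:ℝ) < (f x : ℝ) := by exact_mod_cast hf x
          rw [← hlogsplit x]
          field_simp
        rw [expand]
      rw [hRHS2]; exact hLHS
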